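/- Let 𝒱 be a partition of ω* into clopen sets, and let G be a directed graph with vertex set 𝒱. The following are equivalent: (1) G is transitive; (2) G = Hit(𝒱,h) for some h ∈ Iso(σ); (3) G = Hit(𝒱,h) for some h ∈ Iso(σ⁻¹). -/

import Mathlib

open Set TopologicalSpace

noncomputable section

/-- `ω*`, the Stone–Čech remainder `βω ∖ ω`: the space of free (non-principal)
ultrafilters on `ℕ`, as a subspace of `βℕ = Ultrafilter ℕ` (whose topology is
generated by the clopen sets `A* = {u : A ∈ u}` for `A ⊆ ℕ`). -/
abbrev NStar : Type := {u : Ultrafilter ℕ // ∀ n : ℕ, u ≠ pure n}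

lemma free_map_add (u : NStar) : ∀ n : ℕ, Ultrafilter.map (· + 1) u.1 ≠ pure n := by
  intro n hn
  have h1 : (· + 1) ⁻¹' {n} ∈ u.1 := by
    have : {n} ∈ Ultrafilter.map (· + 1) u.1 := by
      rw [hn]; exact Ultrafilter.mem_pure.mpr rfl
    exact this
  have hfin : ((· + 1) ⁻¹' {n} : Set ℕ).Finite := by
    apply Set.Finite.subset (Set.finite_singleton (n - 1))
    intro x hx
    simp only [Set.mem_preimage, Set.mem_singleton_iff] at hx ⊢
    omega
  obtain ⟨x, -, hx⟩ := Ultrafilter.eq_pure_of_finite_mem hfin h1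
  exact u.2 x hx

lemma free_map_sub (u : NStar) : ∀ n : ℕ, Ultrafilter.map (· - 1) u.1 ≠ pure n := by
  intro n hn
  have h1 : (· - 1) ⁻¹' {n} ∈ u.1 := by
    have : {n} ∈ Ultrafilter.map (· - 1) u.1 := by
      rw [hn]; exact Ultrafilter.mem_pure.mpr rfl
    exact this
  have hfin : ((· - 1) ⁻¹' {n} : Set ℕ).Finite := by
    apply Set.Finite.subset (Set.toFinite {0, 1, n + 1})
    intro x hx
    simp only [Set.mem_preimage, Set.mem_singleton_iff] at hx
    simp only [Set.mem_insert_iff, Set.mem_singleton_iff]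
    omega
  obtain ⟨x, -, hx⟩ := Ultrafilter.eq_pure_of_finite_mem hfin h1
  exact u.2 x hx

lemma ucofinite (u : NStar) : (u.1 : Filter ℕ) ≤ Filter.cofinite := by
  rcases u.1.le_cofinite_or_eq_pure with h | ⟨a, ha⟩
  · exact h
  · exact absurd ha (u.2 a)

lemma left_inv_aux (u : NStar) :
    Ultrafilter.map (· - 1) (Ultrafilter.map (· + 1) u.1) = u.1 := by
  apply Ultrafilter.coe_injective
  rw [Ultrafilter.coe_map, Ultrafilter.coe_map, Filter.map_map]
  have : ((· - 1) ∘ (· + 1) : ℕ → ℕ) = id := by funext x; simp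
  rw [this, Filter.map_id]

lemma right_inv_aux (u : NStar) :
    Ultrafilter.map (· + 1) (Ultrafilter.map (· - 1) u.1) = u.1 := by
  apply Ultrafilter.coe_injective
  rw [Ultrafilter.coe_map, Ultrafilter.coe_map, Filter.map_map]
  have h1 : ((· + 1) ∘ (· - 1) : ℕ → ℕ) =ᶠ[(u.1 : Filter ℕ)] id := by
    apply ucofinite u
    have : {x : ℕ | ¬ ((· + 1) ∘ (· - 1) : ℕ → ℕ) x = id x} ⊆ {0} := by
      intro x hx
      simp only [Function.comp_apply, id_eq, Set.mem_setOf_eq] at hx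
      simp only [Set.mem_singleton_iff]
      omega
    exact Set.Finite.subset (Set.finite_singleton 0) this
  calc Filter.map ((· + 1) ∘ (· - 1)) (u.1 : Filter ℕ)
      = Filter.map id (u.1 : Filter ℕ) := Filter.map_congr h1
    _ = (u.1 : Filter ℕ) := Filter.map_id

lemma continuous_umap (m : ℕ → ℕ) :
    Continuous (Ultrafilter.map m : Ultrafilter ℕ → Ultrafilter ℕ) := by
  rw [ultrafilterBasis_is_basis.continuous_iff]
  rintro _ ⟨s, rfl⟩
  exact ultrafilter_isOpen_basic (m ⁻¹' s)

/-- The shift map on `ω*`: it sends `u` to the ultrafilter generated by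
`{A + 1 : A ∈ u}`, i.e. the image ultrafilter of `u` under `n ↦ n + 1`. -/
def shiftF (u : NStar) : NStar := ⟨Ultrafilter.map (· + 1) u.1, free_map_add u⟩

/-- The inverse of the shift map on `ω*`, induced by the predecessor function. -/
def shiftInvF (u : NStar) : NStar := ⟨Ultrafilter.map (· - 1) u.1, free_map_sub u⟩

/-- The shift map `σ : ω* → ω*` as a self-homeomorphism of `ω*`. -/
def sigmaShift : NStar ≃ₜ NStar :=
  { toFun := shiftF
    invFun := shiftInvF
    left_inv := fun u => Subtype.ext (left_inv_aux u)
    right_inv := fun u => Subtype.ext (right_inv_aux u)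
    continuous_toFun :=
      Continuous.subtype_mk ((continuous_umap (· + 1)).comp continuous_subtype_val) _
    continuous_invFun :=
      Continuous.subtype_mk ((continuous_umap (· - 1)).comp continuous_subtype_val) _ }

/-- `f` and `g` are isomorphic dynamical systems on `ω*`: there is `h ∈ H(ω*)`
with `h ∘ f = g ∘ h`. -/
def Isomorphic (f g : NStar ≃ₜ NStar) : Prop :=
  ∃ h : NStar ≃ₜ NStar, ∀ u, h (f u) = g (h u)

/-- `Iso(σ)`: the set of members of `H(ω*)` isomorphic to the shift map `σ`. -/
def IsoSigma : Set (NStar ≃ₜ NStar) := {h | Isomorphic h sigmaShift}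

/-- `Iso(σ⁻¹)`: the set of members of `H(ω*)` isomorphic to `σ⁻¹`. -/
def IsoSigmaInv : Set (NStar ≃ₜ NStar) := {h | Isomorphic h sigmaShift.symm}

/-- The compact-open topology on the group `H(X)` of self-homeomorphisms of `X`,
generated by the sets `V(K,U) = {h : h[K] ⊆ U}` for `K` compact and `U` open. -/
instance homeoCO {X : Type*} [TopologicalSpace X] : TopologicalSpace (X ≃ₜ X) :=
  TopologicalSpace.generateFrom
    {S : Set (X ≃ₜ X) | ∃ K U : Set X, IsCompact K ∧ IsOpen U ∧
      S = {h : X ≃ₜ X | ∀ x ∈ K, h x ∈ U}}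

/-- `𝒱` is a partition of `ω*` into (nonempty) clopen sets. -/
def IsClopenPartition (𝒱 : Set (Set NStar)) : Prop :=
  (∀ A ∈ 𝒱, IsClopen A ∧ A.Nonempty) ∧ 𝒱.Pairwise Disjoint ∧ ⋃₀ 𝒱 = univ

/-- `G = Hit(𝒱,h)`: for `A, B ∈ 𝒱`, `G` has an edge `A → B` iff `h[A] ∩ B ≠ ∅`. -/
def HitEq (𝒱 : Set (Set NStar)) (h : NStar ≃ₜ NStar)
    (G : Set NStar → Set NStar → Prop) : Prop :=
  ∀ A ∈ 𝒱, ∀ B ∈ 𝒱, (G A B ↔ ((⇑h '' A) ∩ B).Nonempty)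

/-- The digraph `G` with vertex set `𝒱` is transitive: any two vertices are joined
by a path of length `n ≥ 1` along edges of `G`. -/
def GraphTransitiveOn (𝒱 : Set (Set NStar))
    (G : Set NStar → Set NStar → Prop) : Prop :=
  ∀ A ∈ 𝒱, ∀ B ∈ 𝒱, ∃ n : ℕ, 1 ≤ n ∧ ∃ v : ℕ → Set NStar,
    v 0 = A ∧ v n = B ∧ (∀ i ≤ n, v i ∈ 𝒱) ∧ ∀ i < n, G (v i) (v (i + 1))

namespace Stmt12Aux

def star (S : Set ℕ) : Set NStar := {u | S ∈ u.1}

lemma isClopen_star (S : Set ℕ) : IsClopen (star S) :=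
  ⟨(ultrafilter_isClosed_basic S).preimage continuous_subtype_val,
   (ultrafilter_isOpen_basic S).preimage continuous_subtype_val⟩

lemma star_inter (S T : Set ℕ) : star S ∩ star T = star (S ∩ T) := by
  ext u; exact (Filter.inter_mem_iff).symm

lemma star_nonempty_iff (S : Set ℕ) : (star S).Nonempty ↔ S.Infinite := by
  constructor
  · rintro ⟨u, hu⟩
    intro hfin
    obtain ⟨x, -, hx⟩ := Ultrafilter.eq_pure_of_finite_mem hfin hu
    exact u.2 x hx
  · intro hS
    have hne : Filter.NeBot (Filter.cofinite ⊓ Filter.principal S) := by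
      rw [Filter.inf_principal_neBot_iff]
      intro U hU
      have : (S \ Uᶜ).Infinite := hS.diff hU
      obtain ⟨x, hx⟩ := this.nonempty
      exact ⟨x, not_not.mp hx.2, hx.1⟩
    let u := Ultrafilter.of (Filter.cofinite ⊓ Filter.principal S)
    have hle : (u : Filter ℕ) ≤ Filter.cofinite ⊓ Filter.principal S := Ultrafilter.of_le _
    have hfree : ∀ n : ℕ, u ≠ pure n := by
      intro n hn
      have : ({n}ᶜ : Set ℕ) ∈ u := hle (Filter.mem_inf_of_left (Set.finite_singleton n).compl_mem_cofinite)
      rw [hn] at this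
      exact this rfl
    refine ⟨⟨u, hfree⟩, ?_⟩
    exact hle (Filter.mem_inf_of_right (Filter.mem_principal_self S))

lemma star_empty_of_finite {S : Set ℕ} (h : S.Finite) : star S = ∅ := by
  rw [← Set.not_nonempty_iff_eq_empty]
  rw [star_nonempty_iff]
  exact fun h' => h' h

lemma finite_of_star_empty {S : Set ℕ} (h : star S = ∅) : S.Finite := by
  by_contra hf
  rw [← Set.not_infinite] at hf
  push_neg at hf
  obtain ⟨u, hu⟩ := (star_nonempty_iff S).mpr hf
  rw [h] at hu; exact hu

lemma star_subset_of {S T : Set ℕ} (h : (S \ T).Finite) : star S ⊆ star T := by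
  intro u hu
  have h1 : (S \ T)ᶜ ∈ u.1 := ucofinite u h.compl_mem_cofinite
  have h2 : S ∩ (S \ T)ᶜ ∈ u.1 := Filter.inter_mem hu h1
  refine Filter.mem_of_superset h2 ?_
  intro x ⟨hxS, hx⟩
  by_contra hxT
  exact hx ⟨hxS, hxT⟩

lemma star_eq_of {S T : Set ℕ} (h1 : (S \ T).Finite) (h2 : (T \ S).Finite) :
    star S = star T :=
  le_antisymm (star_subset_of h1) (star_subset_of h2)

lemma isClosed_nstar : IsClosed {u : Ultrafilter ℕ | ∀ n : ℕ, u ≠ pure n} := by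
  have : {u : Ultrafilter ℕ | ∀ n : ℕ, u ≠ pure n}ᶜ = ⋃ n : ℕ, {u : Ultrafilter ℕ | ({n} : Set ℕ) ∈ u} := by
    ext u
    simp only [Set.mem_compl_iff, Set.mem_setOf_eq, Set.mem_iUnion, not_forall, not_not]
    constructor
    · rintro ⟨n, hn⟩; exact ⟨n, by rw [hn]; exact rfl⟩
    · rintro ⟨n, hn⟩
      obtain ⟨x, hx, he⟩ := Ultrafilter.eq_pure_of_finite_mem (Set.finite_singleton n) hn
      exact ⟨x, he⟩
  rw [← isOpen_compl_iff, this]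
  exact isOpen_iUnion fun n => ultrafilter_isOpen_basic _

instance : CompactSpace NStar :=
  isCompact_iff_compactSpace.mp (isClosed_nstar.isCompact)

lemma exists_star_eq {V : Set NStar} (hV : IsClopen V) : ∃ S : Set ℕ, V = star S := by
  have hcV : IsCompact V := hV.isClosed.isCompact
  obtain ⟨U, hU, hVU⟩ := isOpen_induced_iff.mp hV.isOpen
  have hK : IsCompact (Subtype.val '' V) := hcV.image continuous_subtype_val
  have hKU : Subtype.val '' V ⊆ U := by
    rintro _ ⟨u, hu, rfl⟩; rw [← hVU] at hu; exact hu
  -- choose basic sets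
  have hbasic : ∀ x : Ultrafilter ℕ, x ∈ U → ∃ s : Set ℕ, x ∈ {u : Ultrafilter ℕ | s ∈ u} ∧ {u : Ultrafilter ℕ | s ∈ u} ⊆ U := by
    intro x hx
    obtain ⟨v, hv, hxv, hvU⟩ := ultrafilterBasis_is_basis.exists_subset_of_mem_open hx hU
    obtain ⟨s, rfl⟩ := hv
    exact ⟨s, hxv, hvU⟩
  choose! s hs1 hs2 using hbasic
  have hcover : Subtype.val '' V ⊆ ⋃ x : {x : Ultrafilter ℕ // x ∈ U}, {u : Ultrafilter ℕ | s x.1 ∈ u} := by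
    intro y hy
    exact Set.mem_iUnion.mpr ⟨⟨y, hKU hy⟩, hs1 y (hKU hy)⟩
  obtain ⟨t, ht⟩ := hK.elim_finite_subcover (fun x : {x : Ultrafilter ℕ // x ∈ U} => {u : Ultrafilter ℕ | s x.1 ∈ u}) (fun x => ultrafilter_isOpen_basic (s x.1)) hcover
  refine ⟨⋃ x ∈ t, s x.1, ?_⟩
  apply Set.eq_of_subset_of_subset
  · intro u hu
    have : u.1 ∈ ⋃ x ∈ t, {w : Ultrafilter ℕ | s x.1 ∈ w} := ht ⟨u, hu, rfl⟩
    obtain ⟨x, hx, hux⟩ := Set.mem_iUnion₂.mp this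
    refine Filter.mem_of_superset hux ?_
    exact Set.subset_biUnion_of_mem (u := fun x : {x : Ultrafilter ℕ // x ∈ U} => s x.1) hx
  · intro u hu
    have : (⋃ x ∈ (t : Set {x : Ultrafilter ℕ // x ∈ U}), s x.1) ∈ u.1 := hu
    have hex : ∃ x ∈ (t : Set {x : Ultrafilter ℕ // x ∈ U}), s x.1 ∈ u.1 :=
      (Ultrafilter.finite_biUnion_mem_iff t.finite_toSet).mp this
    obtain ⟨x, -, hx⟩ := hex
    have : u.1 ∈ U := hs2 x.1 x.2 hx
    rw [← hVU]; exact this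


lemma star_mem_iff (S : Set ℕ) (u : NStar) : u ∈ star S ↔ S ∈ u.1 := Iff.rfl

variable {𝒱 : Set (Set NStar)}

lemma finite_partition (hpart : IsClopenPartition 𝒱) : 𝒱.Finite := by
  obtain ⟨hcl, hdisj, huniv⟩ := hpart
  have hcover : (univ : Set NStar) ⊆ ⋃ V : 𝒱, (V : Set NStar) := by
    rw [← huniv]; intro u hu
    obtain ⟨V, hV, huV⟩ := hu
    exact Set.mem_iUnion.mpr ⟨⟨V, hV⟩, huV⟩
  obtain ⟨t, ht⟩ := isCompact_univ.elim_finite_subcover (fun V : 𝒱 => (V : Set NStar))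
    (fun V => (hcl V V.2).1.isOpen) hcover
  have : 𝒱 ⊆ Subtype.val '' (t : Set 𝒱) := by
    intro V hV
    obtain ⟨u, hu⟩ := (hcl V hV).2
    have : u ∈ ⋃ W ∈ t, (W : Set NStar) := ht (Set.mem_univ u)
    obtain ⟨W, hWt, huW⟩ := Set.mem_iUnion₂.mp this
    have hVW : V = W.1 := by
      by_contra hne
      exact Set.disjoint_left.mp (hdisj hV W.2 hne) hu huW
    exact ⟨W, hWt, hVW.symm⟩
  exact Set.Finite.subset (t.finite_toSet.image _) this

lemma nstar_nonempty : Nonempty NStar := by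
  obtain ⟨u, hu⟩ := (star_nonempty_iff Set.univ).mpr Set.infinite_univ
  exact ⟨u⟩

lemma exists_coloring (hpart : IsClopenPartition 𝒱) :
    ∃ c : ℕ → Set NStar, (∀ n, c n ∈ 𝒱) ∧ ∀ V ∈ 𝒱, star (c ⁻¹' {V}) = V := by
  classical
  obtain ⟨hcl, hdisj, huniv⟩ := hpart
  have hfin := finite_partition ⟨hcl, hdisj, huniv⟩
  -- choose S_V
  have hex : ∀ V : Set NStar, V ∈ 𝒱 → ∃ S : Set ℕ, V = star S :=
    fun V hV => exists_star_eq (hcl V hV).1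
  choose! S hS using hex
  -- 𝒱 nonempty
  obtain ⟨u0⟩ := nstar_nonempty
  have h𝒱ne : ∃ V0, V0 ∈ 𝒱 := by
    have : u0 ∈ ⋃₀ 𝒱 := huniv ▸ Set.mem_univ u0
    obtain ⟨V, hV, -⟩ := this; exact ⟨V, hV⟩
  obtain ⟨V0, hV0⟩ := h𝒱ne
  -- intersections finite
  have hSint : ∀ V ∈ 𝒱, ∀ W ∈ 𝒱, V ≠ W → (S V ∩ S W).Finite := by
    intro V hV W hW hne
    apply finite_of_star_empty
    rw [← star_inter, ← hS V hV, ← hS W hW]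
    exact Set.disjoint_iff_inter_eq_empty.mp (hdisj hV hW hne)
  -- leftover finite
  have hR : {n : ℕ | ∀ V ∈ 𝒱, n ∉ S V}.Finite := by
    apply finite_of_star_empty
    rw [← Set.not_nonempty_iff_eq_empty]
    rintro ⟨u, hu⟩
    have : u ∈ ⋃₀ 𝒱 := huniv ▸ Set.mem_univ u
    obtain ⟨V, hV, huV⟩ := this
    have hSV : S V ∈ u.1 := by
      have := hS V hV; rw [this] at huV; exact (star_mem_iff _ _).mp huV
    have hRu : {n : ℕ | ∀ V ∈ 𝒱, n ∉ S V} ∈ u.1 := (star_mem_iff _ _).mp hu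
    have : ({n : ℕ | ∀ V ∈ 𝒱, n ∉ S V} ∩ S V) ∈ u.1 := Filter.inter_mem hRu hSV
    have hempty : {n : ℕ | ∀ V ∈ 𝒱, n ∉ S V} ∩ S V = ∅ := by
      ext n; simp only [Set.mem_inter_iff, Set.mem_setOf_eq, Set.mem_empty_iff_false, iff_false]
      rintro ⟨h1, h2⟩; exact h1 V hV h2
    rw [hempty] at this
    exact Filter.empty_notMem _ this
  -- define coloring
  set c : ℕ → Set NStar := fun n =>
    if h : ∃ V ∈ 𝒱, n ∈ S V then h.choose else V0 with hc
  have hcmem : ∀ n, c n ∈ 𝒱 := by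
    intro n
    rw [hc]; dsimp only
    split
    · next h => exact h.choose_spec.1
    · exact hV0
  have hcS : ∀ n, (∃ V ∈ 𝒱, n ∈ S V) → n ∈ S (c n) := by
    intro n h
    rw [hc]; dsimp only
    rw [dif_pos h]
    exact h.choose_spec.2
  refine ⟨c, hcmem, ?_⟩
  intro V hV
  conv_rhs => rw [hS V hV]
  apply star_eq_of
  · -- c⁻¹{V} \ S V ⊆ leftover
    apply hR.subset
    intro n ⟨hn1, hn2⟩
    simp only [Set.mem_preimage, Set.mem_singleton_iff] at hn1
    intro W hW hnW
    have h1 : n ∈ S (c n) := hcS n ⟨W, hW, hnW⟩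
    rw [hn1] at h1
    exact hn2 h1
  · -- S V \ c⁻¹{V} ⊆ finite union
    have : S V \ c ⁻¹' {V} ⊆ ⋃ W ∈ 𝒱 \ {V}, S V ∩ S W := by
      intro n ⟨hn1, hn2⟩
      simp only [Set.mem_preimage, Set.mem_singleton_iff] at hn2
      have h1 : n ∈ S (c n) := hcS n ⟨V, hV, hn1⟩
      refine Set.mem_biUnion ⟨hcmem n, ?_⟩ ⟨hn1, h1⟩
      simp only [Set.mem_singleton_iff]
      exact fun h => hn2 h
    apply Set.Finite.subset _ this
    apply Set.Finite.biUnion (hfin.diff : (𝒱 \ {V}).Finite)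
    intro W hW
    exact hSint V hV W hW.1 (fun h => hW.2 (by simp [h]))
lemma umap_umap (f g : ℕ → ℕ) (u : Ultrafilter ℕ) :
    Ultrafilter.map f (Ultrafilter.map g u) = Ultrafilter.map (fun n => f (g n)) u := by
  apply Ultrafilter.coe_injective
  rw [Ultrafilter.coe_map, Ultrafilter.coe_map, Ultrafilter.coe_map, Filter.map_map]
  rfl

lemma free_map_perm (e : ℕ ≃ ℕ) (u : NStar) :
    ∀ n : ℕ, Ultrafilter.map e u.1 ≠ pure n := by
  intro n hn
  have h1 : (e : ℕ → ℕ) ⁻¹' {n} ∈ u.1 := by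
    have : {n} ∈ Ultrafilter.map e u.1 := by
      rw [hn]; exact Ultrafilter.mem_pure.mpr rfl
    exact this
  have hfin : ((e : ℕ → ℕ) ⁻¹' {n} : Set ℕ).Finite := by
    apply Set.Finite.subset (Set.finite_singleton (e.symm n))
    intro x hx
    simp only [Set.mem_preimage, Set.mem_singleton_iff] at hx ⊢
    rw [← hx]; simp
  obtain ⟨x, -, hx⟩ := Ultrafilter.eq_pure_of_finite_mem hfin h1
  exact u.2 x hx

/-- The self-homeomorphism of `ω*` induced by a permutation of `ℕ`. -/
def permHomeo (e : ℕ ≃ ℕ) : NStar ≃ₜ NStar :=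
  { toFun := fun u => ⟨Ultrafilter.map e u.1, free_map_perm e u⟩
    invFun := fun u => ⟨Ultrafilter.map e.symm u.1, free_map_perm e.symm u⟩
    left_inv := fun u => Subtype.ext (by
      simp only [umap_umap]
      apply Ultrafilter.coe_injective
      rw [Ultrafilter.coe_map]
      have : (fun n => e.symm (e n)) = id := by funext x; simp
      rw [this, Filter.map_id])
    right_inv := fun u => Subtype.ext (by
      simp only [umap_umap]
      apply Ultrafilter.coe_injective
      rw [Ultrafilter.coe_map]
      have : (fun n => e (e.symm n)) = id := by funext x; simp
      rw [this, Filter.map_id])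
    continuous_toFun :=
      Continuous.subtype_mk ((continuous_umap e).comp continuous_subtype_val) _
    continuous_invFun :=
      Continuous.subtype_mk ((continuous_umap e.symm).comp continuous_subtype_val) _ }

/-- The conjugate of the shift by `permHomeo e`. -/
def conjShift (e : ℕ ≃ ℕ) : NStar ≃ₜ NStar :=
  ((permHomeo e).symm.trans sigmaShift).trans (permHomeo e)

lemma conjShift_val (e : ℕ ≃ ℕ) (u : NStar) :
    ((conjShift e) u).1 = Ultrafilter.map (fun n => e (e.symm n + 1)) u.1 := by
  show (permHomeo e (sigmaShift ((permHomeo e).symm u))).1 = _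
  show Ultrafilter.map e (Ultrafilter.map (· + 1) (Ultrafilter.map e.symm u.1)) = _
  rw [umap_umap, umap_umap]

lemma conjShift_iso (e : ℕ ≃ ℕ) :
    ∀ u, (permHomeo e).symm ((conjShift e) u) = sigmaShift ((permHomeo e).symm u) := by
  intro u
  show (permHomeo e).symm ((permHomeo e) (sigmaShift ((permHomeo e).symm u))) = _
  exact (permHomeo e).symm_apply_apply _

lemma hit_map_iff (h : NStar ≃ₜ NStar) (g : ℕ → ℕ)
    (hg : ∀ u : NStar, (h u).1 = Ultrafilter.map g u.1) (S T : Set ℕ) :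
    (((h : NStar → NStar) '' star S) ∩ star T).Nonempty ↔ (S ∩ g ⁻¹' T).Infinite := by
  rw [← star_nonempty_iff, ← star_inter]
  constructor
  · rintro ⟨v, ⟨⟨u, hu, rfl⟩, hv⟩⟩
    refine ⟨u, hu, ?_⟩
    have : T ∈ (h u).1 := hv
    rw [hg u] at this
    exact this
  · rintro ⟨u, hu, hu2⟩
    refine ⟨h u, ⟨u, hu, rfl⟩, ?_⟩
    show T ∈ (h u).1
    rw [hg u]
    exact hu2

lemma sigma_val (u : NStar) : ((sigmaShift : NStar ≃ₜ NStar) u).1 = Ultrafilter.map (· + 1) u.1 := rfl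

lemma hit_sigma_iff (S T : Set ℕ) :
    (((sigmaShift : NStar ≃ₜ NStar) : NStar → NStar) '' star S ∩ star T).Nonempty ↔
      {n | n ∈ S ∧ n + 1 ∈ T}.Infinite := by
  rw [hit_map_iff sigmaShift (· + 1) (fun u => rfl)]
  rfl

lemma exists_walk {α : Type*} (𝒱 : Set α) (hfin : 𝒱.Finite)
    (G : α → α → Prop) (A₀ : α) (hA₀ : A₀ ∈ 𝒱)
    (htrans : ∀ A ∈ 𝒱, ∀ B ∈ 𝒱, ∃ (n : ℕ) (v : ℕ → α), 1 ≤ n ∧ v 0 = A ∧ v n = B ∧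
      (∀ i ≤ n, v i ∈ 𝒱) ∧ ∀ i < n, G (v i) (v (i + 1))) :
    ∃ d : ℕ → α, (∀ n, d n ∈ 𝒱) ∧ (∀ n, G (d n) (d (n + 1))) ∧
      ∀ V ∈ 𝒱, ∀ W ∈ 𝒱, G V W → {n | d n = V ∧ d (n + 1) = W}.Infinite := by
  classical
  choose! len pth hlen h0 hend hmem hedge using htrans
  -- the set of edges
  set E : Set (α × α) := {p | p.1 ∈ 𝒱 ∧ p.2 ∈ 𝒱 ∧ G p.1 p.2} with hE
  have hEfin : E.Finite := (hfin.prod hfin).subset (fun p hp => ⟨hp.1, hp.2.1⟩)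
  have hEne : E.Nonempty := by
    refine ⟨(A₀, pth A₀ A₀ 1), hA₀, ?_, ?_⟩
    · have h1 : 1 ≤ len A₀ A₀ := hlen A₀ hA₀ A₀ hA₀
      exact hmem A₀ hA₀ A₀ hA₀ 1 h1
    · have h1 : 0 < len A₀ A₀ := hlen A₀ hA₀ A₀ hA₀
      have := hedge A₀ hA₀ A₀ hA₀ 0 h1
      rwa [h0 A₀ hA₀ A₀ hA₀] at this
  obtain ⟨f, hf⟩ := hEfin.countable.exists_eq_range hEne
  set ε : ℕ → α × α := fun k => f (Nat.unpair k).2 with hεdef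
  have hεE : ∀ k, ε k ∈ E := fun k => hf ▸ Set.mem_range_self _
  have hεinf : ∀ p ∈ E, {k | ε k = p}.Infinite := by
    intro p hp
    rw [hf] at hp
    obtain ⟨a, ha⟩ := hp
    have hsub : Set.range (fun m => Nat.pair m a) ⊆ {k | ε k = p} := by
      rintro _ ⟨m, rfl⟩
      show f (Nat.unpair (Nat.pair m a)).2 = p
      rw [Nat.unpair_pair]
      exact ha
    refine Set.Infinite.mono hsub (Set.infinite_range_of_injective ?_)
    intro m m' h
    have := congrArg (fun z => (Nat.unpair z).1) h
    simpa [Nat.unpair_pair] using this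
  -- block data
  set x : ℕ → α := fun k => Nat.rec A₀ (fun k _ => (ε k).2) k with hxdef
  have hx0 : x 0 = A₀ := rfl
  have hxs : ∀ k, x (k + 1) = (ε k).2 := fun k => rfl
  have hxmem : ∀ k, x k ∈ 𝒱 := by
    intro k
    cases k with
    | zero => exact hA₀
    | succ k => exact (hεE k).2.1
  set m : ℕ → ℕ := fun k => len (x k) (ε k).1 with hmdef
  have hm1 : ∀ k, 1 ≤ m k := fun k => hlen _ (hxmem k) _ (hεE k).1
  set L : ℕ → ℕ := fun k => m k + 1 with hLdef
  set q : ℕ → ℕ → α := fun k t => if t ≤ m k then pth (x k) (ε k).1 t else (ε k).2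
    with hqdef
  have hq0 : ∀ k, q k 0 = x k := by
    intro k
    show (if 0 ≤ m k then pth (x k) (ε k).1 0 else (ε k).2) = x k
    rw [if_pos (Nat.zero_le _)]
    exact h0 _ (hxmem k) _ (hεE k).1
  have hqm : ∀ k, q k (m k) = (ε k).1 := by
    intro k
    show (if m k ≤ m k then pth (x k) (ε k).1 (m k) else (ε k).2) = (ε k).1
    rw [if_pos le_rfl]
    exact hend _ (hxmem k) _ (hεE k).1
  have hqL : ∀ k, q k (m k + 1) = (ε k).2 := by
    intro k
    show (if m k + 1 ≤ m k then _ else (ε k).2) = (ε k).2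
    rw [if_neg (by omega)]
  have hqmem : ∀ k, ∀ t ≤ m k, q k t ∈ 𝒱 := by
    intro k t ht
    show (if t ≤ m k then pth (x k) (ε k).1 t else (ε k).2) ∈ 𝒱
    rw [if_pos ht]
    exact hmem _ (hxmem k) _ (hεE k).1 t ht
  have hqedge : ∀ k, ∀ t ≤ m k, G (q k t) (q k (t + 1)) := by
    intro k t ht
    rcases eq_or_lt_of_le ht with rfl | hlt
    · rw [hqm, hqL]
      exact (hεE k).2.2
    · have h1 : q k t = pth (x k) (ε k).1 t := if_pos ht
      have h2 : q k (t + 1) = pth (x k) (ε k).1 (t + 1) := if_pos (by omega)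
      rw [h1, h2]
      exact hedge _ (hxmem k) _ (hεE k).1 t hlt
  -- offsets
  set O : ℕ → ℕ := fun k => Nat.rec 0 (fun k Ok => Ok + L k) k with hOdef
  have hO0 : O 0 = 0 := rfl
  have hOs : ∀ k, O (k + 1) = O k + L k := fun k => rfl
  have hOmono : StrictMono O := by
    apply strictMono_nat_of_lt_succ
    intro k
    rw [hOs]
    have := hm1 k
    simp only [hLdef]
    omega
  have hOk : ∀ k, k ≤ O k := by
    intro k
    induction k with
    | zero => omega
    | succ k ih =>
      rw [hOs]
      have := hm1 k
      simp only [hLdef]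
      omega
  set K : ℕ → ℕ := fun n => Nat.findGreatest (fun k => O k ≤ n) n with hKdef
  have hK1 : ∀ n, O (K n) ≤ n := by
    intro n
    exact Nat.findGreatest_spec (P := fun k => O k ≤ n) (m := 0) (Nat.zero_le n) (le_of_eq_of_le hO0 (Nat.zero_le n))
  have hK2 : ∀ n, n < O (K n + 1) := by
    intro n
    by_contra hcon
    push_neg at hcon
    have h1 : K n + 1 ≤ n := le_trans (hOk _) hcon
    have h2 : K n + 1 ≤ K n := Nat.le_findGreatest (P := fun k => O k ≤ n) h1 hcon
    omega
  have hKuniq : ∀ k n, O k ≤ n → n < O (k + 1) → K n = k := by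
    intro k n h1 h2
    have hub : K n ≤ k := by
      by_contra hlt
      push_neg at hlt
      have h3 : O (k + 1) ≤ O (K n) := hOmono.monotone (Nat.succ_le_of_lt hlt)
      have h4 := hK1 n
      omega
    have hlb : k ≤ K n := Nat.le_findGreatest (P := fun j => O j ≤ n) (le_trans (hOk k) h1) h1
    omega
  set d : ℕ → α := fun n => q (K n) (n - O (K n)) with hddef
  have hdblock : ∀ k n, O k ≤ n → n < O (k + 1) → d n = q k (n - O k) := by
    intro k n h1 h2
    rw [hddef]
    dsimp only
    rw [hKuniq k n h1 h2]
  have hsub : ∀ n, n - O (K n) ≤ m (K n) := by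
    intro n
    have h1 := hK1 n
    have h2 := hK2 n
    rw [hOs] at h2
    simp only [hLdef] at h2
    omega
  have hdmem : ∀ n, d n ∈ 𝒱 := by
    intro n
    exact hqmem _ _ (hsub n)
  -- successor formula
  have hdsucc : ∀ n, d (n + 1) = q (K n) (n - O (K n) + 1) := by
    intro n
    have h1 := hK1 n
    have h2 := hK2 n
    rcases lt_or_eq_of_le (Nat.succ_le_of_lt h2) with hlt | heq
    · rw [hdblock (K n) (n + 1) (by omega) hlt]
      congr 1
      omega
    · -- n + 1 = O (K n + 1)
      have hOs1 : O (K n + 1) = O (K n) + m (K n) + 1 := by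
        rw [hOs]; simp only [hLdef]; omega
      have hOs2 : O (K n + 1) < O (K n + 1 + 1) := hOmono (Nat.lt_succ_self (K n + 1))
      have ha : O (K n + 1) ≤ n + 1 := by omega
      have hb : n + 1 < O (K n + 1 + 1) := by omega
      have hd1 : d (n + 1) = q (K n + 1) (n + 1 - O (K n + 1)) :=
        hdblock (K n + 1) (n + 1) ha hb
      have hz : n + 1 - O (K n + 1) = 0 := by omega
      rw [hd1, hz]
      rw [hq0 (K n + 1), hxs (K n)]
      have ht : n - O (K n) + 1 = m (K n) + 1 := by omega
      rw [ht, hqL (K n)]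
  have hdedge : ∀ n, G (d n) (d (n + 1)) := by
    intro n
    rw [hdsucc n]
    exact hqedge _ _ (hsub n)
  refine ⟨d, hdmem, hdedge, ?_⟩
  intro V hV W hW hG
  have hpE : (V, W) ∈ E := ⟨hV, hW, hG⟩
  set F : ℕ → ℕ := fun k => O k + m k with hFdef
  have hdF : ∀ k, d (F k) = (ε k).1 := by
    intro k
    have h1 : O k ≤ F k := by simp only [hFdef]; omega
    have h2 : F k < O (k + 1) := by
      rw [hOs]; simp only [hFdef, hLdef]; omega
    rw [hdblock k (F k) h1 h2]
    have : F k - O k = m k := by simp only [hFdef]; omega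
    rw [this, hqm]
  have hdF1 : ∀ k, d (F k + 1) = (ε k).2 := by
    intro k
    have hKF : K (F k) = k := by
      apply hKuniq
      · simp only [hFdef]; omega
      · rw [hOs]; simp only [hFdef, hLdef]; omega
    rw [hdsucc, hKF]
    have : F k - O k + 1 = m k + 1 := by simp only [hFdef]; omega
    rw [this, hqL]
  have hFmono : StrictMono F := by
    apply strictMono_nat_of_lt_succ
    intro k
    have h1 : O (k + 1) = O k + m k + 1 := by rw [hOs]; simp only [hLdef]; omega
    have h2 := hm1 (k + 1)
    simp only [hFdef]
    omega
  have hsub2 : F '' {k | ε k = (V, W)} ⊆ {n | d n = V ∧ d (n + 1) = W} := by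
    rintro _ ⟨k, hk, rfl⟩
    have h1 := hdF k
    have h2 := hdF1 k
    rw [hk] at h1 h2
    exact ⟨h1, h2⟩
  refine Set.Infinite.mono hsub2 ?_
  exact (Set.infinite_image_iff (hFmono.injective.injOn)).mpr (hεinf _ hpE)
lemma infinite_subtype_equiv {S T : Set ℕ} (hS : S.Infinite) (hT : T.Infinite) :
    Nonempty (S ≃ T) := by
  haveI := hS.to_subtype
  haveI := hT.to_subtype
  obtain ⟨dS⟩ := nonempty_denumerable S
  obtain ⟨dT⟩ := nonempty_denumerable T
  exact ⟨(@Denumerable.eqv S dS).trans (@Denumerable.eqv T dT).symm⟩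

lemma exists_nat_equiv {α : Type*} (c d : ℕ → α)
    (h : ∀ a : α, Nonempty ({n // d n = a} ≃ {n // c n = a})) :
    ∃ e : ℕ ≃ ℕ, ∀ n, c (e n) = d n := by
  have g : ∀ a : α, {n // d n = a} ≃ {n // c n = a} := fun a => (h a).some
  exact ⟨Equiv.ofFiberEquiv g, fun n => Equiv.ofFiberEquiv_map g n⟩

lemma trans_of_coloring {α : Type*} (𝒱 : Set α) (hfin : 𝒱.Finite) (c : ℕ → α)
    (hc : ∀ n, c n ∈ 𝒱) (hfib : ∀ V ∈ 𝒱, {n | c n = V}.Infinite)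
    (R : α → α → Prop)
    (hR : ∀ V ∈ 𝒱, ∀ W ∈ 𝒱, (R V W ↔ {n | c n = V ∧ c (n + 1) = W}.Infinite)) :
    ∀ A ∈ 𝒱, ∀ B ∈ 𝒱, ∃ n : ℕ, 1 ≤ n ∧ ∃ v : ℕ → α, v 0 = A ∧ v n = B ∧
      (∀ i ≤ n, v i ∈ 𝒱) ∧ ∀ i < n, R (v i) (v (i + 1)) := by
  intro A hA B hB
  classical
  -- bad positions
  set Bad : Set ℕ := {n | ¬ R (c n) (c (n + 1))} with hBad
  have hBadfin : Bad.Finite := by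
    have hsub : Bad ⊆ ⋃ p ∈ {p ∈ 𝒱 ×ˢ 𝒱 | ¬ R p.1 p.2}, {n | c n = p.1 ∧ c (n + 1) = p.2} := by
      intro n hn
      have hn' : ¬ R (c n) (c (n + 1)) := hn
      have hp : ((c n, c (n + 1)) : α × α) ∈ {p ∈ 𝒱 ×ˢ 𝒱 | ¬ R p.1 p.2} :=
        ⟨⟨hc n, hc (n + 1)⟩, hn'⟩
      exact Set.mem_biUnion hp ⟨rfl, rfl⟩
    refine Set.Finite.subset (Set.Finite.biUnion ?_ ?_) hsub
    · exact (hfin.prod hfin).subset (fun p hp => hp.1)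
    · rintro ⟨V, W⟩ hp
      rw [Set.not_infinite.symm]
      intro hinf
      exact hp.2 ((hR V hp.1.1 W hp.1.2).mpr hinf)
  -- bound
  obtain ⟨N, hN⟩ : ∃ N, ∀ x ∈ Bad, x < N := by
    rcases Set.Finite.bddAbove hBadfin with ⟨N, hN⟩
    exact ⟨N + 1, fun x hx => Nat.lt_succ_of_le (hN hx)⟩
  -- find p ≥ N with c p = A
  obtain ⟨p, hpA, hpN⟩ : ∃ p, c p = A ∧ N ≤ p := by
    have := hfib A hA
    by_contra hcon
    push_neg at hcon
    apply this
    apply Set.Finite.subset (Set.finite_Iio N)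
    intro n hn
    exact hcon n hn
  obtain ⟨r, hrB, hrp⟩ : ∃ r, c r = B ∧ p < r := by
    have := hfib B hB
    by_contra hcon
    push_neg at hcon
    apply this
    apply Set.Finite.subset (Set.finite_Iic p)
    intro n hn
    exact hcon n hn
  refine ⟨r - p, by omega, fun i => c (p + i), by simp [hpA], ?_, fun i _ => hc _, ?_⟩
  · show c (p + (r - p)) = B
    rw [show p + (r - p) = r from by omega, hrB]
  · intro i hi
    have hnotbad : p + i ∉ Bad := fun hb => by have := hN _ hb; omega
    have : R (c (p + i)) (c (p + i + 1)) := not_not.mp hnotbad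
    show R (c (p + i)) (c (p + (i + 1)))
    rw [show p + (i + 1) = p + i + 1 from by omega]
    exact this

/-! ### Main auxiliary lemmas -/

lemma coloring_fib_infinite {𝒱 : Set (Set NStar)} (hpart : IsClopenPartition 𝒱)
    (c : ℕ → Set NStar) (hcfib : ∀ V ∈ 𝒱, star (c ⁻¹' {V}) = V) :
    ∀ V ∈ 𝒱, {n | c n = V}.Infinite := by
  intro V hV
  have h1 : (star (c ⁻¹' {V})).Nonempty := by
    rw [hcfib V hV]
    exact (hpart.1 V hV).2
  exact (star_nonempty_iff _).mp h1

lemma main_forward (𝒱 : Set (Set NStar)) (hpart : IsClopenPartition 𝒱)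
    (G : Set NStar → Set NStar → Prop) (htrans : GraphTransitiveOn 𝒱 G) :
    ∃ h ∈ IsoSigma, HitEq 𝒱 h G := by
  classical
  obtain ⟨c, hcmem, hcfib⟩ := exists_coloring hpart
  have hfin := finite_partition hpart
  have hA₀ : c 0 ∈ 𝒱 := hcmem 0
  have htrans' : ∀ A ∈ 𝒱, ∀ B ∈ 𝒱, ∃ (n : ℕ) (v : ℕ → Set NStar), 1 ≤ n ∧ v 0 = A ∧
      v n = B ∧ (∀ i ≤ n, v i ∈ 𝒱) ∧ ∀ i < n, G (v i) (v (i + 1)) := by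
    intro A hA B hB
    obtain ⟨n, hn, v, hv⟩ := htrans A hA B hB
    exact ⟨n, v, hn, hv⟩
  obtain ⟨d, hdmem, hdedge, hdocc⟩ := exists_walk 𝒱 hfin G (c 0) hA₀ htrans'
  have hcinf : ∀ V ∈ 𝒱, {n | c n = V}.Infinite := coloring_fib_infinite hpart c hcfib
  have hdinf : ∀ V ∈ 𝒱, {n | d n = V}.Infinite := by
    intro V hV
    obtain ⟨n1, hn1, v, hv0, -, hvmem, hvedge⟩ := htrans V hV V hV
    have hedge : G V (v 1) := by
      have := hvedge 0 hn1
      rwa [hv0] at this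
    have h1 : v 1 ∈ 𝒱 := hvmem 1 hn1
    exact Set.Infinite.mono (fun n hn => hn.1) (hdocc V hV (v 1) h1 hedge)
  have hfibeq : ∀ a : Set NStar, Nonempty ({n // d n = a} ≃ {n // c n = a}) := by
    intro a
    by_cases ha : a ∈ 𝒱
    · obtain ⟨eq⟩ := infinite_subtype_equiv (hdinf a ha) (hcinf a ha)
      exact ⟨eq⟩
    · have h1 : IsEmpty {n // d n = a} := ⟨fun ⟨n, hn⟩ => ha (hn ▸ hdmem n)⟩
      have h2 : IsEmpty {n // c n = a} := ⟨fun ⟨n, hn⟩ => ha (hn ▸ hcmem n)⟩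
      exact ⟨Equiv.equivOfIsEmpty _ _⟩
  obtain ⟨e, he⟩ := exists_nat_equiv c d hfibeq
  refine ⟨conjShift e, ⟨(permHomeo e).symm, conjShift_iso e⟩, ?_⟩
  intro V hV W hW
  have hset : (c ⁻¹' {V} ∩ (fun n => e (e.symm n + 1)) ⁻¹' (c ⁻¹' {W}))
      = ⇑e '' {m | d m = V ∧ d (m + 1) = W} := by
    ext n
    simp only [Set.mem_inter_iff, Set.mem_preimage, Set.mem_singleton_iff, Set.mem_image,
      Set.mem_setOf_eq]
    constructor
    · rintro ⟨hn1, hn2⟩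
      refine ⟨e.symm n, ⟨?_, ?_⟩, e.apply_symm_apply n⟩
      · rw [← he (e.symm n), Equiv.apply_symm_apply]
        exact hn1
      · rw [← he (e.symm n + 1)]
        exact hn2
    · rintro ⟨m, ⟨hm1, hm2⟩, rfl⟩
      constructor
      · rw [he m]; exact hm1
      · rw [Equiv.symm_apply_apply, he (m + 1)]; exact hm2
  have h1 : ((⇑(conjShift e) '' V) ∩ W).Nonempty ↔ {m | d m = V ∧ d (m + 1) = W}.Infinite := by
    conv_lhs => rw [← hcfib V hV, ← hcfib W hW]
    rw [hit_map_iff (conjShift e) (fun n => e (e.symm n + 1)) (conjShift_val e)]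
    rw [hset, Set.infinite_image_iff e.injective.injOn]
  constructor
  · intro hG
    exact h1.mpr (hdocc V hV W hW hG)
  · intro hne
    obtain ⟨n, hn1, hn2⟩ := (h1.mp hne).nonempty
    have := hdedge n
    rw [hn1, hn2] at this
    exact this

lemma main_backward (𝒱 : Set (Set NStar)) (hpart : IsClopenPartition 𝒱)
    (G : Set NStar → Set NStar → Prop) (h : NStar ≃ₜ NStar)
    (hiso : h ∈ IsoSigma) (hhit : HitEq 𝒱 h G) : GraphTransitiveOn 𝒱 G := by
  classical
  obtain ⟨k, hk⟩ := hiso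
  set 𝒱' : Set (Set NStar) := (Set.image ⇑k) '' 𝒱 with h𝒱'
  have hpart' : IsClopenPartition 𝒱' := by
    refine ⟨?_, ?_, ?_⟩
    · rintro _ ⟨V, hV, rfl⟩
      constructor
      · have himg : ⇑k '' V = ⇑k.symm ⁻¹' V := by
          ext u
          constructor
          · rintro ⟨w, hw, rfl⟩
            show k.symm (k w) ∈ V
            rw [Homeomorph.symm_apply_apply]
            exact hw
          · intro hu
            exact ⟨k.symm u, hu, k.apply_symm_apply u⟩
        rw [himg]
        exact ((hpart.1 V hV).1).preimage k.symm.continuous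
      · exact ((hpart.1 V hV).2).image _
    · rintro _ ⟨V, hV, rfl⟩ _ ⟨W, hW, rfl⟩ hne
      have hVW : V ≠ W := fun heq => hne (by rw [heq])
      rw [Set.disjoint_image_iff k.injective]
      exact hpart.2.1 hV hW hVW
    · rw [h𝒱', ← Set.image_sUnion, hpart.2.2, Set.image_univ]
      exact k.surjective.range_eq
  obtain ⟨c, hcmem, hcfib⟩ := exists_coloring hpart'
  have hfin' := finite_partition hpart'
  have hcinf : ∀ P ∈ 𝒱', {n | c n = P}.Infinite := coloring_fib_infinite hpart' c hcfib
  set R : Set NStar → Set NStar → Prop := fun P Q => G (⇑k ⁻¹' P) (⇑k ⁻¹' Q) with hR0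
  have hR : ∀ P ∈ 𝒱', ∀ Q ∈ 𝒱', (R P Q ↔ {n | c n = P ∧ c (n + 1) = Q}.Infinite) := by
    rintro _ ⟨V, hV, rfl⟩ _ ⟨W, hW, rfl⟩
    show G (⇑k ⁻¹' (⇑k '' V)) (⇑k ⁻¹' (⇑k '' W)) ↔ _
    rw [Set.preimage_image_eq V k.injective, Set.preimage_image_eq W k.injective]
    rw [hhit V hV W hW]
    have hmid : ((⇑h '' V) ∩ W).Nonempty ↔
        ((⇑sigmaShift '' (⇑k '' V)) ∩ (⇑k '' W)).Nonempty := by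
      constructor
      · rintro ⟨u, ⟨w, hw, rfl⟩, hu2⟩
        exact ⟨k (h w), ⟨k w, ⟨w, hw, rfl⟩, (hk w).symm⟩, ⟨h w, hu2, rfl⟩⟩
      · rintro ⟨u, ⟨z, ⟨w, hw, rfl⟩, rfl⟩, hu2⟩
        obtain ⟨w', hw', hww⟩ := hu2
        have h1 : k (h w) = k w' := by rw [hk w]; exact hww.symm
        have h2 : h w = w' := k.injective h1
        exact ⟨h w, ⟨w, hw, rfl⟩, h2 ▸ hw'⟩
    rw [hmid]
    conv_lhs => rw [← hcfib (⇑k '' V) ⟨V, hV, rfl⟩, ← hcfib (⇑k '' W) ⟨W, hW, rfl⟩]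
    rw [hit_sigma_iff]
    exact Iff.rfl
  have key := trans_of_coloring 𝒱' hfin' c hcmem hcinf R hR
  intro A hA B hB
  obtain ⟨n, hn, v, hv0, hvn, hvmem, hvedge⟩ :=
    key (⇑k '' A) ⟨A, hA, rfl⟩ (⇑k '' B) ⟨B, hB, rfl⟩
  refine ⟨n, hn, fun i => ⇑k ⁻¹' (v i), ?_, ?_, ?_, ?_⟩
  · show ⇑k ⁻¹' (v 0) = A
    rw [hv0]
    exact Set.preimage_image_eq _ k.injective
  · show ⇑k ⁻¹' (v n) = B
    rw [hvn]
    exact Set.preimage_image_eq _ k.injective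
  · intro i hi
    obtain ⟨V, hV, hVe⟩ := hvmem i hi
    show ⇑k ⁻¹' (v i) ∈ 𝒱
    rw [← hVe, Set.preimage_image_eq _ k.injective]
    exact hV
  · intro i hi
    show G (⇑k ⁻¹' (v i)) (⇑k ⁻¹' (v (i + 1)))
    exact hvedge i hi

lemma trans_flip (𝒱 : Set (Set NStar)) (G : Set NStar → Set NStar → Prop)
    (h : GraphTransitiveOn 𝒱 G) : GraphTransitiveOn 𝒱 (fun A B => G B A) := by
  intro A hA B hB
  obtain ⟨n, hn, v, hv0, hvn, hvmem, hvedge⟩ := h B hB A hA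
  refine ⟨n, hn, fun i => v (n - i), by simpa using hvn, by simpa using hv0,
    fun i _ => hvmem _ (by omega), ?_⟩
  intro i hi
  show G (v (n - (i + 1))) (v (n - i))
  have h1 : n - i = n - (i + 1) + 1 := by omega
  rw [h1]
  exact hvedge (n - (i + 1)) (by omega)

lemma image_inter_symm (h : NStar ≃ₜ NStar) (A B : Set NStar) :
    ((⇑h.symm '' A) ∩ B).Nonempty ↔ ((⇑h '' B) ∩ A).Nonempty := by
  constructor
  · rintro ⟨u, ⟨w, hw, rfl⟩, h2⟩
    exact ⟨w, ⟨h.symm w, h2, h.apply_symm_apply w⟩, hw⟩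
  · rintro ⟨u, ⟨w, hw, rfl⟩, h2⟩
    exact ⟨w, ⟨h w, h2, h.symm_apply_apply w⟩, hw⟩

lemma exists_inv_iff (𝒱 : Set (Set NStar)) (G : Set NStar → Set NStar → Prop) :
    (∃ h ∈ IsoSigmaInv, HitEq 𝒱 h G) ↔
      (∃ h ∈ IsoSigma, HitEq 𝒱 h (fun A B => G B A)) := by
  constructor
  · rintro ⟨h, ⟨k, hk⟩, hhit⟩
    refine ⟨h.symm, ⟨k, ?_⟩, ?_⟩
    · intro u
      have h1 := hk (h.symm u)
      rw [h.apply_symm_apply] at h1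
      rw [h1, Homeomorph.apply_symm_apply]
    · intro A hA B hB
      show G B A ↔ _
      rw [hhit B hB A hA]
      exact (image_inter_symm h A B).symm
  · rintro ⟨h, ⟨k, hk⟩, hhit⟩
    refine ⟨h.symm, ⟨k, ?_⟩, ?_⟩
    · intro u
      have h1 := hk (h.symm u)
      rw [h.apply_symm_apply] at h1
      rw [h1, Homeomorph.symm_apply_apply]
    · intro A hA B hB
      have h2 := hhit B hB A hA
      show G A B ↔ _
      rw [show (G A B) = ((fun A B => G B A) B A) from rfl, h2]
      exact (image_inter_symm h A B).symm

end Stmt12Aux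

/-- Let `𝒱` be a partition of `ω*` into clopen sets and `G` a digraph with vertex
set `𝒱`. The following are equivalent: (1) `G` is transitive;
(2) `G = Hit(𝒱,h)` for some `h ∈ Iso(σ)`; (3) `G = Hit(𝒱,h)` for some
`h ∈ Iso(σ⁻¹)`. -/
theorem stmt_12 (𝒱 : Set (Set NStar)) (hpart : IsClopenPartition 𝒱)
    (G : Set NStar → Set NStar → Prop) :
    (GraphTransitiveOn 𝒱 G ↔ ∃ h ∈ IsoSigma, HitEq 𝒱 h G) ∧
    (GraphTransitiveOn 𝒱 G ↔ ∃ h ∈ IsoSigmaInv, HitEq 𝒱 h G) := by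
  constructor
  · constructor
    · exact fun htrans => Stmt12Aux.main_forward 𝒱 hpart G htrans
    · rintro ⟨h, hiso, hhit⟩
      exact Stmt12Aux.main_backward 𝒱 hpart G h hiso hhit
  · constructor
    · intro htrans
      exact (Stmt12Aux.exists_inv_iff 𝒱 G).mpr
        (Stmt12Aux.main_forward 𝒱 hpart (fun A B => G B A)
          (Stmt12Aux.trans_flip 𝒱 G htrans))
    · intro hinv
      obtain ⟨h, hiso, hhit⟩ := (Stmt12Aux.exists_inv_iff 𝒱 G).mp hinv
      exact Stmt12Aux.trans_flip 𝒱 (fun A B => G B A)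
        (Stmt12Aux.main_backward 𝒱 hpart (fun A B => G B A) h hiso hhit)
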